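/- Let ω, ω_X, ω_C, γ, g be real numbers with γ ≠ 0, g > 0, and ω_X < ω < ω_C (band 3.2). Then there exist odd functions φ_X, φ_C : ℝ → ℝ such that: φ_C is continuously differentiable on ℝ with φ_C(0) = 0 and is twice differentiable at every x ≠ 0; the pair (φ_X, φ_C) satisfies the stationary polariton envelope equations at every x ≠ 0; φ_X(x) → √(ϖ_X/g) as x → 0 from the right (so φ_X has a jump discontinuity at 0); the function x ↦ φ_X(x)² is strictly increasing on (0, ∞); and φ_X(x)² → (ϖ_X − γ²/ϖ_C)/g as x → +∞. -/

import Mathlib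

open Filter Set MeasureTheory

lemma quadrature_ode (a s : ℝ) (has : a < s) (F : ℝ → ℝ) (U : Set ℝ)
    (hU : IsOpen U) (hUsub : Set.Icc a s ⊆ U)
    (hFc : ContinuousOn F U)
    (hFpos : ∀ t ∈ Set.Ico a s, 0 < F t)
    (hdiv : Tendsto (fun t => ∫ τ in a..t, (F τ)⁻¹) (nhdsWithin s (Set.Iio s)) atTop) :
    ∃ u : ℝ → ℝ,
      (∀ x ∈ Set.Ioi (0:ℝ), u x ∈ Set.Ioo a s ∧ HasDerivAt u (F (u x)) x) ∧
      StrictMonoOn u (Set.Ioi 0) ∧ Tendsto u (nhdsWithin 0 (Set.Ioi 0)) (nhds a) ∧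
      Tendsto u atTop (nhds s) := by
  classical
  -- continuity of F at points of U
  have hFca : ∀ t ∈ U, ContinuousAt F t := fun t ht => hFc.continuousAt (hU.mem_nhds ht)
  -- the open set where F is positive
  set V : Set ℝ := {t ∈ U | 0 < F t} with hV
  have hVopen : IsOpen V := by
    rw [isOpen_iff_mem_nhds]
    rintro t ⟨htU, htF⟩
    filter_upwards [hU.mem_nhds htU, (hFca t htU).eventually (eventually_gt_nhds htF)]
      with y hyU hyF
    exact ⟨hyU, hyF⟩
  have hIcoV : Set.Ico a s ⊆ V := fun t ht => ⟨hUsub ⟨ht.1, ht.2.le⟩, hFpos t ht⟩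
  have hFinvc : ∀ t ∈ V, ContinuousAt (fun τ => (F τ)⁻¹) t :=
    fun t ht => (hFca t ht.1).inv₀ (ne_of_gt ht.2)
  set H : ℝ → ℝ := fun t => ∫ τ in a..t, (F τ)⁻¹ with hH
  have hHder : ∀ t ∈ Set.Ico a s, HasDerivAt H (F t)⁻¹ t := by
    intro t ht
    apply intervalIntegral.integral_hasDerivAt_right
    · apply ContinuousOn.intervalIntegrable
      intro τ hτ
      rw [Set.uIcc_of_le ht.1] at hτ
      exact (hFinvc τ (hIcoV ⟨hτ.1, lt_of_le_of_lt hτ.2 ht.2⟩)).continuousWithinAt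
    · exact ContinuousOn.stronglyMeasurableAtFilter hVopen
        (fun τ hτ => (hFinvc τ hτ).continuousWithinAt) t (hIcoV ht)
    · exact hFinvc t (hIcoV ht)
  have hHcont : ContinuousOn H (Set.Ico a s) :=
    fun t ht => (hHder t ht).continuousAt.continuousWithinAt
  have hHmono : StrictMonoOn H (Set.Ico a s) := by
    apply strictMonoOn_of_deriv_pos (convex_Ico a s) hHcont
    intro t ht
    rw [interior_Ico] at ht
    rw [(hHder t ⟨ht.1.le, ht.2⟩).deriv]
    exact inv_pos.2 (hFpos t ⟨ht.1.le, ht.2⟩)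
  have hHa : H a = 0 := intervalIntegral.integral_same
  -- surjectivity onto [0, ∞)
  have hsurj : ∀ x : ℝ, 0 ≤ x → ∃ t, t ∈ Set.Ico a s ∧ H t = x := by
    intro x hx
    have h1 : ∀ᶠ t in nhdsWithin s (Set.Iio s), x < H t :=
      hdiv.eventually (eventually_gt_atTop x)
    have h2 : Set.Ioo a s ∈ nhdsWithin s (Set.Iio s) :=
      Ioo_mem_nhdsLT_of_mem ⟨has, le_rfl⟩
    obtain ⟨t₁, hxt₁, ht₁⟩ := (h1.and h2).exists
    have hcont : ContinuousOn H (Set.Icc a t₁) :=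
      hHcont.mono (fun τ hτ => ⟨hτ.1, lt_of_le_of_lt hτ.2 ht₁.2⟩)
    have := intermediate_value_Icc ht₁.1.le hcont
    have hmem : x ∈ Set.Icc (H a) (H t₁) := by
      rw [hHa]; exact ⟨hx, hxt₁.le⟩
    obtain ⟨t, htm, htx⟩ := this hmem
    exact ⟨t, ⟨htm.1, lt_of_le_of_lt htm.2 ht₁.2⟩, htx⟩
  set u : ℝ → ℝ := fun x => if hx : 0 ≤ x then (hsurj x hx).choose else a with hu
  have huspec : ∀ x : ℝ, 0 ≤ x → u x ∈ Set.Ico a s ∧ H (u x) = x := by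
    intro x hx
    simp only [hu, dif_pos hx]
    exact (hsurj x hx).choose_spec
  have huIoo : ∀ x : ℝ, 0 < x → u x ∈ Set.Ioo a s := by
    intro x hx
    obtain ⟨hm, hHx⟩ := huspec x hx.le
    refine ⟨lt_of_le_of_ne hm.1 ?_, hm.2⟩
    intro h
    rw [← h, hHa] at hHx
    exact absurd hHx.symm (ne_of_gt hx)
  -- reflect inequalities through H
  have hlt : ∀ x t : ℝ, 0 ≤ x → t ∈ Set.Ico a s → H t < x → t < u x := by
    intro x t hx ht hHt
    obtain ⟨hm, hHx⟩ := huspec x hx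
    by_contra h
    have := hHmono.monotoneOn hm ht (not_lt.1 h)
    rw [hHx] at this
    exact absurd hHt (not_lt.2 this)
  have hgt : ∀ x t : ℝ, 0 ≤ x → t ∈ Set.Ico a s → x < H t → u x < t := by
    intro x t hx ht hHt
    obtain ⟨hm, hHx⟩ := huspec x hx
    by_contra h
    have := hHmono.monotoneOn ht hm (not_lt.1 h)
    rw [hHx] at this
    exact absurd hHt (not_lt.2 this)
  -- strict monotonicity of u
  have humono : StrictMonoOn u (Set.Ioi 0) := by
    intro x hx y hy hxy
    apply hlt y (u x) (le_of_lt hy) ⟨(huspec x (le_of_lt hx)).1.1, (huspec x (le_of_lt hx)).1.2⟩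
    rw [(huspec x (le_of_lt hx)).2]; exact hxy
  -- continuity of u at positive points
  have hucont : ∀ x : ℝ, 0 < x → ContinuousAt u x := by
    intro x hx
    rcases huIoo x hx with ⟨hax, hxs⟩
    rw [ContinuousAt]
    apply tendsto_order.2
    constructor
    · intro b hb
      set m := max b a with hm
      have hmIco : m ∈ Set.Ico a s := ⟨le_max_right _ _, max_lt (lt_trans hb hxs) has⟩
      have hmlt : m < u x := max_lt hb hax
      have hHm : H m < x := by
        rw [← (huspec x hx.le).2]
        exact hHmono hmIco (huspec x hx.le).1 hmlt
      filter_upwards [Ioi_mem_nhds (show max (H m) 0 < x from max_lt hHm hx)] with y hy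
      calc b ≤ m := le_max_left _ _
        _ < u y := hlt y m (le_of_lt (lt_of_le_of_lt (le_max_right _ _) hy))
            hmIco (lt_of_le_of_lt (le_max_left _ _) hy)
    · intro b hb
      set m := min b ((u x + s)/2) with hm
      have humx : u x < m := lt_min hb (by linarith)
      have hmIco : m ∈ Set.Ico a s :=
        ⟨le_of_lt (lt_trans hax humx), lt_of_le_of_lt (min_le_right _ _) (by linarith)⟩
      have hHm : x < H m := by
        rw [← (huspec x hx.le).2]
        exact hHmono (huspec x hx.le).1 hmIco humx
      filter_upwards [Ioo_mem_nhds hx hHm] with y hy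
      calc u y < m := hgt y m hy.1.le hmIco hy.2
        _ ≤ b := min_le_left _ _
  -- derivative of u
  have huder : ∀ x : ℝ, 0 < x → HasDerivAt u (F (u x)) x := by
    intro x hx
    have hmem := huIoo x hx
    have hHd : HasDerivAt H (F (u x))⁻¹ (u x) := hHder _ ⟨hmem.1.le, hmem.2⟩
    have h0 : (F (u x))⁻¹ ≠ 0 := inv_ne_zero (ne_of_gt (hFpos _ ⟨hmem.1.le, hmem.2⟩))
    have hloc : ∀ᶠ y in nhds x, H (u y) = y := by
      filter_upwards [Ioi_mem_nhds hx] with y hy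
      exact (huspec y (le_of_lt hy)).2
    have := HasDerivAt.of_local_left_inverse (hucont x hx) hHd h0 hloc
    simpa using this
  -- limits
  have hulim0 : Tendsto u (nhdsWithin 0 (Set.Ioi 0)) (nhds a) := by
    apply tendsto_order.2
    constructor
    · intro b hb
      filter_upwards [self_mem_nhdsWithin] with y hy
      exact lt_trans hb (huIoo y hy).1
    · intro b hb
      set m := min b ((a + s)/2) with hm
      have ham : a < m := lt_min hb (by linarith)
      have hmIco : m ∈ Set.Ico a s :=
        ⟨ham.le, lt_of_le_of_lt (min_le_right _ _) (by linarith)⟩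
      have hHm : 0 < H m := by rw [← hHa]; exact hHmono ⟨le_rfl, has⟩ hmIco ham
      have : Set.Ioo (0:ℝ) (H m) ∈ nhdsWithin 0 (Set.Ioi 0) :=
        Ioo_mem_nhdsGT_of_mem ⟨le_rfl, hHm⟩
      filter_upwards [this] with y hy
      exact lt_of_lt_of_le (hgt y m hy.1.le hmIco hy.2) (min_le_left _ _)
  have hulimtop : Tendsto u atTop (nhds s) := by
    apply tendsto_order.2
    constructor
    · intro b hb
      set m := max b a with hm
      have hmIco : m ∈ Set.Ico a s := ⟨le_max_right _ _, max_lt hb has⟩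
      filter_upwards [eventually_gt_atTop (max (H m) 0)] with y hy
      calc b ≤ m := le_max_left _ _
        _ < u y := hlt y m (le_of_lt (lt_of_le_of_lt (le_max_right _ _) hy))
            hmIco (lt_of_le_of_lt (le_max_left _ _) hy)
    · intro b hb
      filter_upwards [eventually_gt_atTop 0] with y hy
      exact lt_trans (huIoo y hy).2 hb
  exact ⟨u, fun x hx => ⟨huIoo x hx, huder x hx⟩, humono, hulim0, hulimtop⟩

set_option maxHeartbeats 2000000 in
/-- Band 3.2: existence of discontinuous dark solitons for `g > 0`, `ωX < ω < ωC`: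
antisymmetric envelopes, `φC` continuously differentiable and twice differentiable away
from `0`, satisfying the envelope equations away from `0`; `φX` jumps at `0` with right
limit `√(ϖX/g)`, `φX²` strictly increasing on `(0,∞)` with far-field value
`(ϖX − γ²/ϖC)/g`. -/
theorem discontinuous_soliton_band_3_2
    (ω ωX ωC γ g : ℝ) (hγ : γ ≠ 0) (hg : 0 < g)
    (hω₁ : ωX < ω) (hω₂ : ω < ωC) :
    ∃ φX φC : ℝ → ℝ,
      (∀ x : ℝ, φX (-x) = -φX x) ∧ (∀ x : ℝ, φC (-x) = -φC x) ∧
      ContDiff ℝ 1 φC ∧ φC 0 = 0 ∧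
      (∀ x : ℝ, x ≠ 0 → DifferentiableAt ℝ (deriv φC) x) ∧
      (∀ x : ℝ, x ≠ 0 →
        (g * φX x ^ 2 - (ω - ωX)) * φX x + γ * φC x = 0 ∧
        -(1/2) * deriv (deriv φC) x - (ω - ωC) * φC x + γ * φX x = 0) ∧
      Tendsto φX (nhdsWithin 0 (Set.Ioi 0)) (nhds (Real.sqrt ((ω - ωX) / g))) ∧
      StrictMonoOn (fun x => φX x ^ 2) (Set.Ioi 0) ∧
      Tendsto (fun x => φX x ^ 2) atTop (nhds (((ω - ωX) - γ ^ 2 / (ω - ωC)) / g)) := by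
  classical
  set ϖ := ω - ωX with hϖdef
  set δ := ωC - ω with hδdef
  have hϖ : 0 < ϖ := sub_pos.2 hω₁
  have hδ : 0 < δ := sub_pos.2 hω₂
  have hγ2 : 0 < γ^2 := by positivity
  set a := Real.sqrt (ϖ/g) with hadef
  set s2 := (ϖ + γ^2/δ)/g with hs2def
  set s := Real.sqrt s2 with hsdef
  set ρ := γ^2/(2*g*δ) with hρdef
  set c := Real.sqrt (2*δ) with hcdef
  have ha2 : a^2 = ϖ/g := Real.sq_sqrt (by positivity)
  have ha : 0 < a := Real.sqrt_pos.2 (by positivity)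
  have hρ : 0 < ρ := by rw [hρdef]; positivity
  have hs2pos : 0 < s2 := by rw [hs2def]; positivity
  have hs : 0 < s := Real.sqrt_pos.2 hs2pos
  have hs2 : s^2 = s2 := Real.sq_sqrt hs2pos.le
  have hc : 0 < c := Real.sqrt_pos.2 (by positivity)
  have hc2 : c^2 = 2*δ := Real.sq_sqrt (by positivity)
  have hs2eq : s2 = a^2 + 2*ρ := by
    rw [hs2def, ha2, hρdef]
    field_simp
  have has : a < s := by
    have h1 : ϖ/g < s2 := by rw [hs2eq, ha2]; linarith
    rw [hadef, hsdef]
    exact Real.sqrt_lt_sqrt (by positivity) h1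
  have hϖa : ϖ = g * a^2 := by rw [ha2]; field_simp
  set C : ℝ := a^2/(c*s*Real.sqrt (s2+ρ)) with hC
  have hQ : 0 < Real.sqrt (s2+ρ) := Real.sqrt_pos.2 (by positivity)
  have hCpos : 0 < C := by rw [hC]; positivity
  clear_value ϖ δ a s2 s ρ c C
  -- the vector field
  obtain ⟨F, hF⟩ : ∃ F : ℝ → ℝ, ∀ t, F t = c*(s2 - t^2)*Real.sqrt (t^2+ρ) / (3*t^2 - a^2) :=
    ⟨_, fun t => rfl⟩
  obtain ⟨U, hU⟩ : ∃ U : Set ℝ, ∀ t : ℝ, t ∈ U ↔ a^2 < 3*t^2 :=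
    ⟨{t : ℝ | a^2 < 3*t^2}, fun t => Iff.rfl⟩
  have hUopen : IsOpen U := by
    have : U = {t : ℝ | a^2 < 3*t^2} := Set.ext fun t => by rw [hU]; rfl
    rw [this]
    exact isOpen_lt continuous_const (continuous_const.mul (continuous_pow 2))
  have hUsub : Set.Icc a s ⊆ U := by
    intro t ht
    rw [hU]
    have h1 : a^2 ≤ t^2 := pow_le_pow_left₀ ha.le ht.1 2
    have h2 : 0 < a^2 := pow_pos ha 2
    linarith
  have hFc : ContinuousOn F U := by
    have hFeq : F = fun t => c*(s2 - t^2)*Real.sqrt (t^2+ρ) / (3*t^2 - a^2) := funext hF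
    rw [hFeq]
    apply ContinuousOn.div
    · exact ((continuous_const.mul (continuous_const.sub (continuous_pow 2))).mul
        (((continuous_pow 2).add continuous_const).sqrt)).continuousOn
    · exact ((continuous_const.mul (continuous_pow 2)).sub continuous_const).continuousOn
    · intro t ht
      have ht' : a^2 < 3*t^2 := (hU t).1 ht
      exact sub_ne_zero.2 (ne_of_gt ht')
  have hFpos : ∀ t ∈ Set.Ico a s, 0 < F t := by
    intro t ht
    have h1 : 0 < 3*t^2 - a^2 := by
      have h1 : a^2 ≤ t^2 := pow_le_pow_left₀ ha.le ht.1 2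
      have h2 : 0 < a^2 := pow_pos ha 2
      linarith
    have h2 : t^2 < s2 := by
      rw [← hs2]
      have h2 : t*t < s*s := mul_self_lt_mul_self (ha.le.trans ht.1) ht.2
      nlinarith [h2]
    rw [hF t]
    apply div_pos _ h1
    apply mul_pos (mul_pos hc (by linarith))
    exact Real.sqrt_pos.2 (by nlinarith [sq_nonneg t, hρ])
  -- divergence of the quadrature integral near s
  have hbound : ∀ t ∈ Set.Ico a s, ∀ τ ∈ Set.Icc a t, C/(s-τ) ≤ (F τ)⁻¹ := by
    intro t ht τ hτ
    have hτa : a ≤ τ := hτ.1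
    have hτs : τ < s := lt_of_le_of_lt hτ.2 ht.2
    have hτ2 : τ^2 < s2 := by
      rw [← hs2]
      have h1 : a^2 ≤ τ^2 := pow_le_pow_left₀ ha.le hτa 2
      have h2 : τ*τ < s*s := mul_self_lt_mul_self (ha.le.trans hτa) hτs
      nlinarith [h2]
    have hden : 0 < 3*τ^2 - a^2 := by
      have h1 : a^2 ≤ τ^2 := pow_le_pow_left₀ ha.le hτa 2
      have h2 : 0 < a^2 := pow_pos ha 2
      linarith
    have hq : 0 < Real.sqrt (τ^2+ρ) := Real.sqrt_pos.2 (by nlinarith [sq_nonneg τ, hρ])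
    have hqQ : Real.sqrt (τ^2+ρ) ≤ Real.sqrt (s2+ρ) := Real.sqrt_le_sqrt (by linarith)
    have hFτ : (F τ)⁻¹ = (3*τ^2 - a^2)/(c*(s2 - τ^2)*Real.sqrt (τ^2+ρ)) := by
      rw [hF τ, inv_div]
    rw [hFτ, hC, div_le_div_iff₀ (by linarith) (mul_pos (mul_pos hc (by linarith)) hq)]
    have e1 : s2 - τ^2 = (s-τ)*(s+τ) := by rw [← hs2]; ring
    calc a^2/(c*s*Real.sqrt (s2+ρ)) * (c*(s2-τ^2)*Real.sqrt (τ^2+ρ))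
        = (c*(s-τ)) * (a^2*(s+τ)*Real.sqrt (τ^2+ρ)) / (c*s*Real.sqrt (s2+ρ)) := by
          rw [e1]; ring
      _ ≤ (c*(s-τ)) * ((3*τ^2-a^2)*s*Real.sqrt (s2+ρ)) / (c*s*Real.sqrt (s2+ρ)) := by
          apply div_le_div_of_nonneg_right ?_ (mul_pos (mul_pos hc hs) hQ).le |>.trans_eq rfl
          apply mul_le_mul_of_nonneg_left ?_ (mul_nonneg hc.le (by linarith))
          calc a^2*(s+τ)*Real.sqrt (τ^2+ρ) ≤ a^2*(2*s)*Real.sqrt (s2+ρ) := by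
                apply mul_le_mul (mul_le_mul_of_nonneg_left (by linarith) (sq_nonneg a))
                  hqQ hq.le (mul_nonneg (sq_nonneg a) (by linarith))
            _ = (2*a^2)*s*Real.sqrt (s2+ρ) := by ring
            _ ≤ (3*τ^2-a^2)*s*Real.sqrt (s2+ρ) := by
                apply mul_le_mul_of_nonneg_right
                  (mul_le_mul_of_nonneg_right (by
                    have h1 : a^2 ≤ τ^2 := pow_le_pow_left₀ ha.le hτa 2
                    linarith) hs.le) (Real.sqrt_nonneg _)
      _ = (3*τ^2-a^2)*(s-τ)*(c*s*Real.sqrt (s2+ρ)) / (c*s*Real.sqrt (s2+ρ)) := by ring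
      _ = (3*τ^2-a^2)*(s-τ) := by field_simp
  have hFinv_int : ∀ t ∈ Set.Ico a s, IntervalIntegrable (fun τ => (F τ)⁻¹) MeasureTheory.volume a t := by
    intro t ht
    apply ContinuousOn.intervalIntegrable
    intro τ hτ
    rw [Set.uIcc_of_le ht.1] at hτ
    have hmem : τ ∈ Set.Ico a s := ⟨hτ.1, lt_of_le_of_lt hτ.2 ht.2⟩
    have hτU : τ ∈ U := hUsub ⟨hmem.1, hmem.2.le⟩
    exact ((hFc.continuousAt (hUopen.mem_nhds hτU)).inv₀
      (ne_of_gt (hFpos τ hmem))).continuousWithinAt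
  have hlog : ∀ t ∈ Set.Ico a s,
      ∫ τ in a..t, C/(s-τ) = C*Real.log (s-a) - C*Real.log (s-t) := by
    intro t ht
    have key : ∀ τ ∈ Set.uIcc a t, HasDerivAt (fun y => -(C * Real.log (s-y))) (C/(s-τ)) τ := by
      intro τ hτ
      rw [Set.uIcc_of_le ht.1] at hτ
      have hτs : 0 < s - τ := by
        have := lt_of_le_of_lt hτ.2 ht.2; linarith
      have h1 : HasDerivAt (fun y : ℝ => s - y) (-1) τ := (hasDerivAt_id τ).const_sub s
      have h2 := (h1.log (ne_of_gt hτs)).const_mul C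
      have h3 := h2.neg
      refine h3.congr_deriv ?_
      field_simp
    have hint : IntervalIntegrable (fun τ => C/(s-τ)) MeasureTheory.volume a t := by
      apply ContinuousOn.intervalIntegrable
      intro τ hτ
      rw [Set.uIcc_of_le ht.1] at hτ
      have hτs : 0 < s - τ := by
        have := lt_of_le_of_lt hτ.2 ht.2; linarith
      exact (continuousAt_const.div ((continuous_const.sub continuous_id).continuousAt)
        (ne_of_gt hτs)).continuousWithinAt
    have := intervalIntegral.integral_eq_sub_of_hasDerivAt key hint
    rw [this]
    ring
  have hdiv : Tendsto (fun t => ∫ τ in a..t, (F τ)⁻¹) (nhdsWithin s (Set.Iio s)) atTop := by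
    have h1 : Tendsto (fun t => s - t) (nhdsWithin s (Set.Iio s)) (nhdsWithin 0 (Set.Ioi 0)) := by
      apply tendsto_nhdsWithin_of_tendsto_nhds_of_eventually_within
      · have h0 : Tendsto (fun t : ℝ => s - t) (nhds s) (nhds (s - s)) :=
          (continuous_const.sub continuous_id).tendsto s
        rw [sub_self] at h0
        exact h0.mono_left nhdsWithin_le_nhds
      · filter_upwards [self_mem_nhdsWithin] with y hy
        simp only [Set.mem_Iio] at hy
        simp only [Set.mem_Ioi]
        linarith
    have h2 : Tendsto (fun t => Real.log (s-t)) (nhdsWithin s (Set.Iio s)) atBot :=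
      Real.tendsto_log_nhdsGT_zero.comp h1
    have h3 : Tendsto (fun t => Real.log (s-a) - Real.log (s-t)) (nhdsWithin s (Set.Iio s)) atTop := by
      have := tendsto_neg_atBot_atTop.comp h2
      have h4 := tendsto_atTop_add_const_left _ (Real.log (s-a)) this
      apply h4.congr
      intro t
      simp [Function.comp]
      ring
    have h5 := h3.const_mul_atTop hCpos
    apply tendsto_atTop_mono' _ _ h5
    filter_upwards [Ico_mem_nhdsLT_of_mem (Set.mem_Ioc.2 ⟨has, le_rfl⟩)] with t ht
    calc C * (Real.log (s-a) - Real.log (s-t))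
        = C*Real.log (s-a) - C*Real.log (s-t) := by ring
      _ = ∫ τ in a..t, C/(s-τ) := (hlog t ht).symm
      _ ≤ ∫ τ in a..t, (F τ)⁻¹ := by
          apply intervalIntegral.integral_mono_on ht.1 ?_ (hFinv_int t ht) (hbound t ht)
          apply ContinuousOn.intervalIntegrable
          intro τ hτ
          rw [Set.uIcc_of_le ht.1] at hτ
          have hτs : 0 < s - τ := by
            have := lt_of_le_of_lt hτ.2 ht.2; linarith
          exact (continuousAt_const.div ((continuous_const.sub continuous_id).continuousAt)
            (ne_of_gt hτs)).continuousWithinAt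
  obtain ⟨u, hu1, humono, hulim0, hulimtop⟩ := quadrature_ode a s has F U hUopen hUsub hFc hFpos hdiv
  -- define the envelopes
  obtain ⟨φX, hφXdef⟩ : ∃ φX : ℝ → ℝ,
      ∀ x, φX x = if 0 < x then u x else if x < 0 then -u (-x) else 0 := ⟨_, fun x => rfl⟩
  obtain ⟨φC, hφCdef⟩ : ∃ φC : ℝ → ℝ, ∀ x, φC x = (ϖ * φX x - g * φX x^3)/γ := ⟨_, fun x => rfl⟩
  have hφXpos : ∀ x : ℝ, 0 < x → φX x = u x := fun x hx => by rw [hφXdef, if_pos hx]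
  have hφXneg : ∀ x : ℝ, x < 0 → φX x = -u (-x) := fun x hx => by
    rw [hφXdef, if_neg (not_lt.2 hx.le), if_pos hx]
  have hφX0 : φX 0 = 0 := by rw [hφXdef]; simp
  have hφXodd : ∀ x : ℝ, φX (-x) = -φX x := by
    intro x
    rcases lt_trichotomy x 0 with h|h|h
    · rw [hφXpos (-x) (by linarith), hφXneg x h, neg_neg]
    · rw [h, neg_zero, hφX0, neg_zero]
    · rw [hφXneg (-x) (by linarith), hφXpos x h, neg_neg]
  have hφCodd : ∀ x : ℝ, φC (-x) = -φC x := by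
    intro x; rw [hφCdef, hφCdef, hφXodd]; ring
  have hφC0 : φC 0 = 0 := by rw [hφCdef, hφX0]; ring
  -- the derivative candidate
  obtain ⟨A, hAdef⟩ : ∃ A : ℝ → ℝ, ∀ x, A x = if x = 0 then a^2 else φX x^2 := ⟨_, fun x => rfl⟩
  obtain ⟨W, hWdef⟩ : ∃ W : ℝ → ℝ,
      ∀ x, W x = -(g*c/γ)*(s2 - A x)*Real.sqrt (A x + ρ) := ⟨_, fun x => rfl⟩
  have hA0 : A 0 = a^2 := by rw [hAdef]; simp
  have hAne : ∀ x : ℝ, x ≠ 0 → A x = φX x^2 := fun x hx => by rw [hAdef, if_neg hx]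
  have hAeven : ∀ x : ℝ, A (-x) = A x := by
    intro x; by_cases h : x = 0
    · rw [h, neg_zero]
    · rw [hAne _ (neg_ne_zero.2 h), hAne _ h, hφXodd]; ring
  have hWeven : ∀ x : ℝ, W (-x) = W x := fun x => by rw [hWdef, hWdef, hAeven]
  have hApos : ∀ x : ℝ, 0 < x → A x = u x^2 := fun x hx => by
    rw [hAne x (ne_of_gt hx), hφXpos x hx]
  -- limits at 0
  have hneg0 : Tendsto (fun x : ℝ => -x) (nhdsWithin 0 (Set.Iio 0)) (nhdsWithin 0 (Set.Ioi 0)) := by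
    apply tendsto_nhdsWithin_of_tendsto_nhds_of_eventually_within
    · have h0 : Tendsto (fun x : ℝ => -x) (nhds 0) (nhds (-0 : ℝ)) := continuous_neg.tendsto 0
      rw [neg_zero] at h0; exact h0.mono_left nhdsWithin_le_nhds
    · filter_upwards [self_mem_nhdsWithin] with y hy
      simp only [Set.mem_Iio] at hy; simp only [Set.mem_Ioi]; linarith
  have huleft : Tendsto (fun x => u (-x)) (nhdsWithin 0 (Set.Iio 0)) (nhds a) := hulim0.comp hneg0
  have hAright : Tendsto A (nhdsWithin 0 (Set.Ioi 0)) (nhds (a^2)) := by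
    have h1 : Tendsto (fun x => u x^2) (nhdsWithin 0 (Set.Ioi 0)) (nhds (a^2)) :=
      ((continuous_pow 2).tendsto a).comp hulim0
    apply h1.congr'
    filter_upwards [self_mem_nhdsWithin] with y hy
    exact (hApos y hy).symm
  have hAleft : Tendsto A (nhdsWithin 0 (Set.Iio 0)) (nhds (a^2)) := by
    have h1 : Tendsto (fun x => (u (-x))^2) (nhdsWithin 0 (Set.Iio 0)) (nhds (a^2)) :=
      ((continuous_pow 2).tendsto a).comp huleft
    apply h1.congr'
    filter_upwards [self_mem_nhdsWithin] with y hy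
    simp only [Set.mem_Iio] at hy
    rw [hAne y (ne_of_lt hy), hφXneg y hy]; ring
  have hAcont : ContinuousAt A 0 := by
    have hpunct : Tendsto A (nhdsWithin 0 ({(0:ℝ)}ᶜ)) (nhds (a^2)) := by
      rw [← nhdsLT_sup_nhdsGT (0:ℝ)]
      exact tendsto_sup.2 ⟨hAleft, hAright⟩
    have hpure : Tendsto A (pure (0:ℝ)) (nhds (a^2)) := by
      have := tendsto_pure_nhds A 0; rwa [hA0] at this
    have hall : Tendsto A (nhdsWithin 0 ({(0:ℝ)}ᶜ) ⊔ pure 0) (nhds (a^2)) :=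
      tendsto_sup.2 ⟨hpunct, hpure⟩
    rw [nhdsNE_sup_pure] at hall
    rw [ContinuousAt, hA0]
    exact hall
  have hWcont0 : ContinuousAt W 0 := by
    have h1 : ContinuousAt (fun x => -(g*c/γ)*(s2 - A x)*Real.sqrt (A x + ρ)) 0 := by
      apply ContinuousAt.mul
      · exact continuousAt_const.mul (continuousAt_const.sub hAcont)
      · exact (Real.continuous_sqrt.continuousAt).comp (hAcont.add continuousAt_const)
    have h2 : W = fun x => -(g*c/γ)*(s2 - A x)*Real.sqrt (A x + ρ) := funext hWdef
    rw [h2]; exact h1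
  have hφCright : Tendsto φC (nhdsWithin 0 (Set.Ioi 0)) (nhds 0) := by
    have hcont : Continuous (fun t : ℝ => (ϖ * t - g * t^3)/γ) :=
      ((continuous_const.mul continuous_id).sub
        (continuous_const.mul (continuous_pow 3))).div_const γ
    have h1 := (hcont.tendsto a).comp hulim0
    have hval : (ϖ * a - g * a^3)/γ = 0 := by rw [hϖa]; field_simp; ring
    rw [hval] at h1
    apply h1.congr'
    filter_upwards [self_mem_nhdsWithin] with y hy
    show (ϖ * u y - g * u y^3)/γ = φC y
    rw [hφCdef, hφXpos y hy]
  have hφCleft : Tendsto φC (nhdsWithin 0 (Set.Iio 0)) (nhds 0) := by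
    have h1 := (hφCright.comp hneg0).neg
    rw [neg_zero] at h1
    apply h1.congr'
    exact Filter.Eventually.of_forall fun y => show -(φC (-y)) = φC y by rw [hφCodd y, neg_neg]
  have hφCcont0 : ContinuousAt φC 0 := by
    have hpunct : Tendsto φC (nhdsWithin 0 ({(0:ℝ)}ᶜ)) (nhds 0) := by
      rw [← nhdsLT_sup_nhdsGT (0:ℝ)]
      exact tendsto_sup.2 ⟨hφCleft, hφCright⟩
    have hpure : Tendsto φC (pure (0:ℝ)) (nhds 0) := by
      have := tendsto_pure_nhds φC 0; rwa [hφC0] at this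
    have hall : Tendsto φC (nhdsWithin 0 ({(0:ℝ)}ᶜ) ⊔ pure 0) (nhds 0) :=
      tendsto_sup.2 ⟨hpunct, hpure⟩
    rw [nhdsNE_sup_pure] at hall
    rw [ContinuousAt, hφC0]
    exact hall
  -- first derivative of φC
  have h3g : ∀ x : ℝ, 0 < x → (0:ℝ) < 3*(u x)^2 - a^2 := by
    intro x hx
    have h1 := (hu1 x hx).1.1
    have h2 : a^2 ≤ (u x)^2 := pow_le_pow_left₀ ha.le h1.le 2
    have h3 : 0 < a^2 := pow_pos ha 2
    linarith
  have hDpos : ∀ x : ℝ, 0 < x → HasDerivAt φC (W x) x := by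
    intro x hx
    obtain ⟨hmem, hd⟩ := hu1 x hx
    have h3 := h3g x hx
    have hv := ((hd.const_mul ϖ).sub ((hd.pow 3).const_mul g)).div_const γ
    have heq : φC =ᶠ[nhds x] fun y => (ϖ * u y - g * u y^3)/γ := by
      filter_upwards [Ioi_mem_nhds hx] with y hy
      rw [hφCdef, hφXpos y hy]
    have h2 := hv.congr_of_eventuallyEq heq
    refine h2.congr_deriv ?_
    rw [hWdef, hAne x (ne_of_gt hx), hφXpos x hx, hF (u x), hϖa]
    have hne : (3*(u x)^2 - a^2) ≠ 0 := ne_of_gt h3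
    norm_num
    field_simp
    rw [div_eq_iff (by intro h; apply hne; linarith)]
    ring
  have hD1 : ∀ x : ℝ, x ≠ 0 → HasDerivAt φC (W x) x := by
    intro x hx
    rcases hx.lt_or_gt with h|h
    · have h1 := hDpos (-x) (by linarith)
      have h2 := (h1.comp x (hasDerivAt_neg x)).neg
      have h4 : HasDerivAt φC (-(W (-x) * -1)) x := by
        apply h2.congr_of_eventuallyEq
        exact Filter.Eventually.of_forall fun y => show φC y = -(φC (-y)) by
          rw [hφCodd y, neg_neg]
      convert h4 using 1
      rw [hWeven x]; ring
    · exact hDpos x h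
  have hD0 : HasDerivAt φC (W 0) 0 := by
    apply hasDerivAt_of_hasDerivAt_of_ne ?_ hφCcont0 hWcont0
    intro y hy
    exact hD1 y hy
  have hDer : ∀ x : ℝ, HasDerivAt φC (W x) x := by
    intro x; by_cases h : x = 0
    · rw [h]; exact hD0
    · exact hD1 x h
  have hderiv_eq : deriv φC = W := funext fun x => (hDer x).deriv
  -- second derivative of φC
  have hD2pos : ∀ x : ℝ, 0 < x → HasDerivAt W ((2*δ*g/γ) * φX x * (s2 - φX x^2)) x := by
    intro x hx
    obtain ⟨hmem, hd⟩ := hu1 x hx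
    have h3 := h3g x hx
    have hargpos : (0:ℝ) < u x^2 + ρ := by nlinarith [sq_nonneg (u x), hρ]
    have hq : 0 < Real.sqrt (u x^2 + ρ) := Real.sqrt_pos.2 hargpos
    have hsq : Real.sqrt (u x^2+ρ)^2 = u x^2 + ρ := Real.sq_sqrt hargpos.le
    have hinner : HasDerivAt (fun y => u y^2 + ρ) ((2:ℕ) * u x^(2-1) * F (u x)) x :=
      (hd.pow 2).add_const ρ
    have hsqrt := hinner.sqrt (ne_of_gt hargpos)
    have houter : HasDerivAt (fun y => -(g*c/γ)*(s2 - u y^2))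
        (-(g*c/γ) * -((2:ℕ) * u x^(2-1) * F (u x))) x :=
      ((hd.pow 2).const_sub s2).const_mul (-(g*c/γ))
    have hprod := houter.mul hsqrt
    have heq : W =ᶠ[nhds x] fun y => -(g*c/γ)*(s2 - u y^2)*Real.sqrt (u y^2+ρ) := by
      filter_upwards [Ioi_mem_nhds hx] with y hy
      rw [hWdef, hAne y (ne_of_gt hy), hφXpos y hy]
    have h2 := hprod.congr_of_eventuallyEq heq
    refine h2.congr_deriv ?_
    rw [hφXpos x hx, hF (u x), ← hc2, hs2eq]
    have hqne : Real.sqrt (u x^2 + ρ) ≠ 0 := ne_of_gt hq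
    have hden : (3*(u x)^2 - a^2) ≠ 0 := ne_of_gt h3
    set q := Real.sqrt (u x^2 + ρ) with hqdef
    clear_value q
    rw [show ρ = q^2 - u x^2 by rw [hsq]; ring]
    norm_num
    field_simp
    rw [div_eq_iff (by intro h; apply hden; linarith)]
    ring
  have hD2 : ∀ x : ℝ, x ≠ 0 → HasDerivAt W ((2*δ*g/γ) * φX x * (s2 - φX x^2)) x := by
    intro x hx
    rcases hx.lt_or_gt with h|h
    · have h1 := hD2pos (-x) (by linarith)
      have h2 := h1.comp x (hasDerivAt_neg x)
      have h4 : HasDerivAt W ((2*δ*g/γ) * φX (-x) * (s2 - φX (-x)^2) * -1) x := by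
        apply h2.congr_of_eventuallyEq
        exact Filter.Eventually.of_forall fun y => show W y = W (-y) from (hWeven y).symm
      convert h4 using 1
      rw [hφXodd]
      ring
    · exact hD2pos x h
  -- assemble
  refine ⟨φX, φC, hφXodd, hφCodd, ?_, hφC0, ?_, ?_, ?_, ?_, ?_⟩
  · rw [contDiff_one_iff_deriv]
    refine ⟨fun x => (hDer x).differentiableAt, ?_⟩
    rw [hderiv_eq, continuous_iff_continuousAt]
    intro x
    by_cases h : x = 0
    · rw [h]; exact hWcont0
    · exact (hD2 x h).differentiableAt.continuousAt
  · intro x hx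
    rw [hderiv_eq]
    exact (hD2 x hx).differentiableAt
  · intro x hx
    constructor
    · rw [hφCdef]; field_simp; ring
    · have hdd : deriv (deriv φC) x = (2*δ*g/γ) * φX x * (s2 - φX x^2) := by
        rw [hderiv_eq]; exact (hD2 x hx).deriv
      rw [hdd, hφCdef]
      have hωC : ω - ωC = -δ := by rw [hδdef]; ring
      rw [hωC, hs2def]
      field_simp
      ring
  · apply hulim0.congr'
    filter_upwards [self_mem_nhdsWithin] with y hy
    exact (hφXpos y hy).symm
  · intro x hx y hy hxy
    show φX x^2 < φX y^2
    rw [hφXpos x hx, hφXpos y hy]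
    have h1 := humono hx hy hxy
    have h0 : 0 < u x := lt_trans ha (hu1 x hx).1.1
    exact pow_lt_pow_left₀ h1 h0.le (by norm_num)
  · rw [show (ϖ - γ^2/(ω - ωC))/g = s2 by
      rw [hs2def, show ω - ωC = -δ by rw [hδdef]; ring, div_neg]; ring]
    have h1 : Tendsto (fun x => u x^2) atTop (nhds s2) := by
      have := ((continuous_pow 2).tendsto s).comp hulimtop
      rwa [hs2] at this
    apply h1.congr'
    filter_upwards [eventually_gt_atTop 0] with y hy
    exact congrArg (fun z : ℝ => z^2) (hφXpos y hy).symm
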